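/- Let d ≥ 3 and fix 0 < ε < 1 < M and an integer m ≥ 1. There exists a constant K such that ℙ-almost surely, for all n large enough and every x ∈ 𝔻(n), the number of sites of T_ε^M(n) in the annulus A_x(n) = D_x(ρ(n) + ν(n)) \ D_x(ρ(n) − ν(n)) is at most K ρ(n)^{d−1} ν(n) g(n)^{−α}. -/

import Mathlib

open MeasureTheory ProbabilityTheory Filter Set
open scoped ENNReal NNReal

/-- Euclidean norm of a point of `ℤ^d`. -/
noncomputable def znorm {d : ℕ} (x : Fin d → ℤ) : ℝ :=
  Real.sqrt (∑ i, ((x i : ℝ)) ^ 2)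

/-- The unit step of the simple random walk indexed by a coordinate and a sign. -/
def stepVec (d : ℕ) (p : Fin d × Bool) : Fin d → ℤ :=
  fun j => if j = p.1 then (if p.2 then 1 else -1) else 0

/-- `Y` is a simple random walk on `ℤ^d` started at `0` under `P`. -/
structure IsSRW {Ω : Type*} [MeasurableSpace Ω] (P : Measure Ω) (d : ℕ)
    (Y : ℕ → Ω → (Fin d → ℤ)) : Prop where
  meas : ∀ k, Measurable (Y k)
  init : ∀ ω, Y 0 ω = 0
  indep : iIndepFun (fun k ω => Y (k + 1) ω - Y k ω) P
  step : ∀ k p, P {ω | Y (k + 1) ω - Y k ω = stepVec d p} = (2 * d : ℝ≥0∞)⁻¹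

/-- i.i.d. heavy-tailed random environment on `ℤ^d`. -/
structure IsEnv {Ω : Type*} [MeasurableSpace Ω] (P : Measure Ω) (d : ℕ) (α : ℝ)
    (L : ℝ → ℝ) (τ : (Fin d → ℤ) → Ω → ℝ) : Prop where
  meas : ∀ x, Measurable (τ x)
  pos : ∀ x ω, 0 < τ x ω
  indep : iIndepFun τ P
  tail : ∀ x u, (1 : ℝ) ≤ u → P {ω | u ≤ τ x ω} = ENNReal.ofReal (u ^ (-α) * (1 + L u))
  decay : Tendsto L atTop (nhds 0)

noncomputable def gscale (α : ℝ) (n : ℕ) : ℝ := (2 : ℝ) ^ ((n : ℝ) / α)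
noncomputable def rscale (n : ℕ) : ℝ := (2 : ℝ) ^ ((n : ℝ) / 2)
noncomputable def rhoscale (d n : ℕ) : ℝ := (2 : ℝ) ^ ((1 - 1 / (3 * (d : ℝ))) * n / 2)
noncomputable def nuscale (d n : ℕ) : ℝ := (2 : ℝ) ^ ((1 / (d : ℝ)) * n / 2)
noncomputable def iotascale (d n : ℕ) : ℝ := (2 : ℝ) ^ ((1 - 2 / (3 * (d : ℝ))) * n / 2)
noncomputable def hscale (d n : ℕ) : ℝ := rscale n / rhoscale d n

/-- the big ball `𝔻(n)` of radius `m · r(n)`. -/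
def bigD (d m n : ℕ) : Set (Fin d → ℤ) := {x | znorm x ≤ m * rscale n}

/-- the cube of side `ℓ` centered at `x`. -/
def cube {d : ℕ} (x : Fin d → ℤ) (ℓ : ℝ) : Set (Fin d → ℤ) :=
  {y | ∀ i, |((y i : ℝ)) - ((x i : ℝ))| ≤ ℓ / 2}

/-- the set of deep traps `T_ε^M(n)`. -/
noncomputable def traps {Ω : Type*} {d : ℕ} (τ : (Fin d → ℤ) → Ω → ℝ) (α : ℝ) (m : ℕ)
    (ε M : ℝ) (n : ℕ) (ω : Ω) : Set (Fin d → ℤ) :=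
  {x ∈ bigD d m n | ε * gscale α n ≤ τ x ω ∧ τ x ω < M * gscale α n}

/-- the set `ℰ(n)` of sites far from all deep traps. -/
noncomputable def calE {Ω : Type*} {d : ℕ} (τ : (Fin d → ℤ) → Ω → ℝ) (α : ℝ) (m : ℕ)
    (ε M : ℝ) (n : ℕ) (ω : Ω) : Set (Fin d → ℤ) :=
  {x ∈ bigD d m n | ∀ y ∈ traps τ α m ε M n ω, nuscale d n < znorm (x - y)}

/-- the set `ℰ₀(n)` of sites of `ℰ(n)` far from the boundary of `𝔻(n)`. -/
noncomputable def calE₀ {Ω : Type*} {d : ℕ} (τ : (Fin d → ℤ) → Ω → ℝ) (α : ℝ) (m : ℕ)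
    (ε M : ℝ) (n : ℕ) (ω : Ω) : Set (Fin d → ℤ) :=
  {x ∈ calE τ α m ε M n ω | ∀ y, y ∉ bigD d m n → rhoscale d n < znorm (x - y)}


/-- the annulus `A_x(n) = D_x(ρ(n)+ν(n)) \ D_x(ρ(n)−ν(n))`. -/
noncomputable def annulus (d : ℕ) (x : Fin d → ℤ) (n : ℕ) : Set (Fin d → ℤ) :=
  {y | znorm (y - x) ≤ rhoscale d n + nuscale d n ∧ ¬ znorm (y - x) ≤ rhoscale d n - nuscale d n}


lemma znorm_nonneg {d : ℕ} (x : Fin d → ℤ) : 0 ≤ znorm x := Real.sqrt_nonneg _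

lemma sum_sq_nonneg' {d : ℕ} (x : Fin d → ℤ) : 0 ≤ ∑ i, ((x i : ℝ))^2 :=
  Finset.sum_nonneg fun i _ => sq_nonneg _

lemma znorm_le_iff {d : ℕ} {x : Fin d → ℤ} {R : ℝ} (hR : 0 ≤ R) :
    znorm x ≤ R ↔ ∑ i, ((x i : ℝ))^2 ≤ R^2 := Real.sqrt_le_left hR

lemma lt_znorm_iff {d : ℕ} {x : Fin d → ℤ} {r : ℝ} (hr : 0 ≤ r) :
    r < znorm x ↔ r^2 < ∑ i, ((x i : ℝ))^2 := Real.lt_sqrt hr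

lemma abs_coord_le_znorm {d : ℕ} (x : Fin d → ℤ) (i : Fin d) :
    |((x i : ℝ))| ≤ znorm x := by
  rw [← Real.sqrt_sq_eq_abs]
  exact Real.sqrt_le_sqrt (Finset.single_le_sum (f := fun j => ((x j:ℝ))^2)
    (fun j _ => sq_nonneg _) (Finset.mem_univ i))

lemma card_Icc_real_le {a b : ℤ} {c : ℝ} (hc : 0 ≤ c) (h : (b:ℝ) - a + 1 ≤ c) :
    (((Finset.Icc a b).card : ℝ)) ≤ c := by
  rw [Int.card_Icc]
  rcases le_or_gt (b + 1 - a) 0 with h0 | h0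
  · rw [Int.toNat_of_nonpos h0]; simpa using hc
  · have e : (((b + 1 - a).toNat : ℤ) : ℝ) = ((b + 1 - a : ℤ) : ℝ) := by
      exact_mod_cast congrArg Int.cast (Int.toNat_of_nonneg h0.le)
    push_cast at e ⊢
    rw [e]; linarith

set_option maxHeartbeats 4000000 in
lemma shell_count {d : ℕ} (hd : 3 ≤ d) (ρ ν : ℝ) (hν : 1 ≤ ν) (hνρ : 2 * ν ≤ ρ)
    (x : Fin d → ℤ) :
    (({y : Fin d → ℤ | znorm (y - x) ≤ ρ + ν ∧ ¬ znorm (y - x) ≤ ρ - ν}).ncard : ℝ)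
      ≤ (10 * (d:ℝ)^2 * 7^(d-1)) * ρ^(d-1) * ν := by
  classical
  have hν0 : (0:ℝ) < ν := lt_of_lt_of_le one_pos hν
  have hρ0 : (0:ℝ) < ρ := lt_of_lt_of_le (by linarith) hνρ
  set r : ℝ := ρ - ν with hrdef
  set R : ℝ := ρ + ν with hRdef
  have hr0 : 0 < r := by simp only [hrdef]; linarith
  have hR0 : 0 < R := by simp only [hRdef]; linarith
  have hR2ρ : R ≤ 2 * ρ := by simp only [hRdef]; linarith
  have hρ2r : ρ ≤ 2 * r := by simp only [hrdef]; linarith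
  have hρ1 : 1 ≤ ρ := by linarith
  have hd0 : (0:ℝ) < d := by exact_mod_cast lt_of_lt_of_le (by norm_num) hd
  have hd1 : (1:ℝ) ≤ d := by exact_mod_cast le_trans (by norm_num) hd
  set Z : Set (Fin d → ℤ) := {z | znorm z ≤ R ∧ ¬ znorm z ≤ r} with hZdef
  -- translation
  have himg : (fun y => y - x) '' {y : Fin d → ℤ | znorm (y - x) ≤ R ∧ ¬ znorm (y - x) ≤ r} = Z := by
    ext z
    constructor
    · rintro ⟨y, hy, rfl⟩; exact hy
    · intro hz
      refine ⟨z + x, ?_, add_sub_cancel_right z x⟩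
      simp only [Set.mem_setOf_eq, add_sub_cancel_right]
      exact hz
  have hinj : Function.Injective (fun y : Fin d → ℤ => y - x) := fun y₁ y₂ h => by
    have := congrArg (· + x) h
    simpa using this
  rw [← Set.ncard_image_of_injective _ hinj, himg]
  -- finiteness
  have hBfin : {z : Fin d → ℤ | znorm z ≤ R}.Finite := by
    apply Set.Finite.subset (Set.Finite.pi (fun _ : Fin d => Set.finite_Icc (-⌈R⌉) ⌈R⌉))
    intro z hz
    simp only [Set.mem_pi, Set.mem_univ, Set.mem_Icc, forall_true_left]
    intro i
    have h1 : |((z i : ℝ))| ≤ R := (abs_coord_le_znorm z i).trans hz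
    have h2 : ((z i : ℝ)) ≤ (⌈R⌉ : ℝ) := le_trans (le_abs_self _) (h1.trans (Int.le_ceil R))
    have h3 : -(⌈R⌉ : ℝ) ≤ ((z i : ℝ)) := by
      have := (neg_abs_le ((z i : ℝ)))
      have h4 : -R ≤ ((z i : ℝ)) := le_trans (neg_le_neg h1) this
      exact le_trans (neg_le_neg (Int.le_ceil R)) h4
    exact ⟨by exact_mod_cast h3, by exact_mod_cast h2⟩
  have hZfin : Z.Finite := hBfin.subset (fun z hz => hz.1)
  set Zi : Fin d → Set (Fin d → ℤ) := fun i => {z ∈ Z | ∀ j, (z j)^2 ≤ (z i)^2} with hZidef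
  have hZifin : ∀ i, (Zi i).Finite := fun i => hZfin.subset (fun z hz => hz.1)
  have hcover : Z ⊆ ⋃ i, Zi i := by
    intro z hz
    obtain ⟨i, _, hi⟩ := Finset.exists_max_image Finset.univ (fun j => (z j)^2)
      ⟨⟨0, by omega⟩, Finset.mem_univ _⟩
    exact Set.mem_iUnion.2 ⟨i, hz, fun j => hi j (Finset.mem_univ j)⟩
  -- per-i bound
  have hZicard : ∀ i, (((hZifin i).toFinset.card : ℝ)) ≤ (10 * d * ν) * (7*ρ)^(d-1) := by
    intro i
    set c : ℤ := ⌈R⌉ with hcdef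
    set b : ℕ := ⌊10 * (d:ℝ) * ν⌋₊ with hbdef
    set f : (Fin d → ℤ) → (Fin d → ℤ) := fun z => Function.update z i 0 with hfdef
    set F := (hZifin i).toFinset with hFdef
    have hmemF : ∀ z ∈ F, z ∈ Zi i := fun z hz => (Set.Finite.mem_toFinset _).1 hz
    -- fiber bound
    have hfib : ∀ w ∈ F.image f, (F.filter (fun z => f z = w)).card ≤ b := by
      intro w hw
      set s : ℝ := ∑ j ∈ Finset.univ.erase i, ((w j : ℝ))^2 with hsdef
      set U : ℝ := Real.sqrt (R^2 - s) with hUdef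
      set L0 : ℝ := max (Real.sqrt (r^2 / d)) (Real.sqrt (r^2 - s)) with hL0def
      have hL0d : Real.sqrt (r^2/d) ≤ L0 := le_max_left _ _
      have hL0pos : 0 < L0 :=
        lt_of_lt_of_le (Real.sqrt_pos.2 (by positivity)) hL0d
      have hrL : r ≤ L0 * Real.sqrt d := by
        have h1 : Real.sqrt (r^2/d) * Real.sqrt d = r := by
          rw [← Real.sqrt_mul (by positivity), div_mul_cancel₀ _ (ne_of_gt hd0),
            Real.sqrt_sq hr0.le]
        calc r = Real.sqrt (r^2/d) * Real.sqrt d := h1.symm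
        _ ≤ L0 * Real.sqrt d := by
            exact mul_le_mul_of_nonneg_right hL0d (Real.sqrt_nonneg d)
      have hUL0 : U ≤ L0 + 4 * d * ν := by
        have hkey : R^2 - s ≤ L0^2 + 4*ρ*ν := by
          rcases le_or_gt s (r^2) with hc | hc
          · have h2 : Real.sqrt (r^2 - s) ≤ L0 := le_max_right _ _
            have h1 : Real.sqrt (r^2 - s) ^2 = r^2 - s := Real.sq_sqrt (by linarith)
            have h3 : (r^2 - s) ≤ L0^2 := by nlinarith [Real.sqrt_nonneg (r^2 - s)]
            have h4 : R^2 - r^2 = 4*ρ*ν := by simp only [hrdef, hRdef]; ring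
            nlinarith
          · have h4 : R^2 - r^2 = 4*ρ*ν := by simp only [hrdef, hRdef]; ring
            nlinarith [sq_nonneg L0]
        have hU2 : U ≤ Real.sqrt (L0^2 + 4*ρ*ν) := Real.sqrt_le_sqrt hkey
        have h4 : Real.sqrt (L0^2 + 4*ρ*ν) ≤ L0 + 2*ρ*ν/L0 := by
          have hq : (2*ρ*ν/L0) * L0 = 2*ρ*ν := div_mul_cancel₀ _ (ne_of_gt hL0pos)
          apply (Real.sqrt_le_left (by positivity)).2
          nlinarith [sq_nonneg (2*ρ*ν/L0)]
        have h5 : 2*ρ*ν/L0 ≤ 4*d*ν := by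
          rw [div_le_iff₀ hL0pos]
          have hsd1 : (1:ℝ) ≤ Real.sqrt d := by
            rw [show (1:ℝ) = Real.sqrt 1 by simp]
            exact Real.sqrt_le_sqrt hd1
          have hsd2 : Real.sqrt d ^ 2 = (d:ℝ) := Real.sq_sqrt hd0.le
          have h6 : 4*ν*Real.sqrt d*r ≤ 4*ν*Real.sqrt d*(L0*Real.sqrt d) :=
            mul_le_mul_of_nonneg_left hrL (by positivity)
          have h7 : 4*ν*Real.sqrt d*(L0*Real.sqrt d) = 4*(d:ℝ)*ν*L0 := by
            linear_combination (4*ν*L0) * hsd2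
          have h8 : 4*ν*r ≤ 4*ν*Real.sqrt d*r := by
            nlinarith [mul_nonneg (mul_nonneg (by linarith : (0:ℝ) ≤ 4*ν) hr0.le)
              (by linarith : (0:ℝ) ≤ Real.sqrt d - 1)]
          have h9 : 2*ρ*ν ≤ 4*ν*r := by nlinarith
          linarith
        linarith
      set T : Finset ℤ := Finset.Icc ⌈L0⌉ ⌊U⌋ ∪ Finset.Icc (-⌊U⌋) (-⌈L0⌉) with hTdef
      have hmemT : ∀ z ∈ F.filter (fun z => f z = w), z i ∈ T := by
        intro z hz
        rw [Finset.mem_filter] at hz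
        obtain ⟨hzF, hzf⟩ := hz
        obtain ⟨⟨hzR, hzr⟩, hzmax⟩ := hmemF z hzF
        have hzw : ∀ j, j ≠ i → z j = w j := by
          intro j hj
          have := congrFun hzf j
          simpa [hfdef, Function.update_of_ne hj] using this
        have hsz : ∑ j, ((z j:ℝ))^2 = ((z i:ℝ))^2 + s := by
          rw [← Finset.add_sum_erase _ _ (Finset.mem_univ i)]
          congr 1
          exact Finset.sum_congr rfl (fun j hj => by
            rw [hzw j (Finset.ne_of_mem_erase hj)])
        set t : ℝ := ((z i : ℝ)) with htdef
        have hup : t^2 + s ≤ R^2 := by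
          have := (znorm_le_iff hR0.le).1 hzR
          rw [hsz] at this; linarith
        have hdown : r^2 < t^2 + s := by
          have := (lt_znorm_iff hr0.le).1 (not_le.1 hzr)
          rw [hsz] at this; linarith
        have hmaxr : r^2 < d * t^2 := by
          have h1 : ∑ j, ((z j:ℝ))^2 ≤ ∑ _j : Fin d, t^2 := by
            apply Finset.sum_le_sum
            intro j _
            have := hzmax j
            have : ((z j:ℝ))^2 ≤ ((z i:ℝ))^2 := by exact_mod_cast this
            exact this
          have h2 : ∑ _j : Fin d, t^2 = d * t^2 := by
            rw [Finset.sum_const, Finset.card_univ, Fintype.card_fin, nsmul_eq_mul]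
          have h3 := (lt_znorm_iff hr0.le).1 (not_le.1 hzr)
          linarith
        have habs1 : |t| ≤ U := by
          rw [← Real.sqrt_sq_eq_abs]
          exact Real.sqrt_le_sqrt (by linarith)
        have habs2 : L0 ≤ |t| := by
          rw [← Real.sqrt_sq_eq_abs]
          apply max_le
          · exact Real.sqrt_le_sqrt (by rw [div_le_iff₀ hd0]; nlinarith)
          · exact Real.sqrt_le_sqrt (by linarith)
        rcases le_or_gt 0 t with ht0 | ht0
        · apply Finset.mem_union_left
          rw [Finset.mem_Icc]
          constructor
          · apply Int.ceil_le.2; rw [abs_of_nonneg ht0] at habs2; exact_mod_cast habs2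
          · apply Int.le_floor.2; rw [abs_of_nonneg ht0] at habs1; exact_mod_cast habs1
        · apply Finset.mem_union_right
          rw [Finset.mem_Icc]
          rw [abs_of_neg ht0] at habs1 habs2
          constructor
          · rw [neg_le]
            apply Int.le_floor.2
            push_cast
            linarith
          · rw [le_neg]
            apply Int.ceil_le.2
            push_cast
            linarith
      have hinjOn : Set.InjOn (fun z : Fin d → ℤ => z i)
          ↑(F.filter (fun z => f z = w)) := by
        intro z₁ h₁ z₂ h₂ h
        simp only [Finset.coe_filter, Set.mem_setOf_eq] at h₁ h₂
        funext j
        by_cases hj : j = i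
        · subst hj; exact h
        · have e₁ := congrFun h₁.2 j
          have e₂ := congrFun h₂.2 j
          simp only [hfdef, Function.update_of_ne hj] at e₁ e₂
          rw [e₁, e₂]
      have hfc : (F.filter (fun z => f z = w)).card ≤ T.card :=
        Finset.card_le_card_of_injOn _ hmemT hinjOn
      apply Nat.le_floor
      calc ((F.filter (fun z => f z = w)).card : ℝ) ≤ (T.card : ℝ) := by exact_mod_cast hfc
      _ ≤ ((Finset.Icc ⌈L0⌉ ⌊U⌋).card : ℝ) + ((Finset.Icc (-⌊U⌋) (-⌈L0⌉)).card : ℝ) := by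
          have := Finset.card_union_le (Finset.Icc ⌈L0⌉ ⌊U⌋) (Finset.Icc (-⌊U⌋) (-⌈L0⌉))
          exact_mod_cast this
      _ ≤ (4*d*ν + 1) + (4*d*ν + 1) := by
          have e1 : ((⌊U⌋:ℝ)) - (⌈L0⌉:ℝ) + 1 ≤ 4*d*ν + 1 := by
            have := Int.floor_le U
            have := Int.le_ceil L0
            linarith [hUL0]
          have hb1 : (0:ℝ) ≤ 4*d*ν + 1 := by positivity
          gcongr
          · exact card_Icc_real_le hb1 e1
          · apply card_Icc_real_le hb1
            push_cast
            have := Int.floor_le U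
            have := Int.le_ceil L0
            linarith [hUL0]
      _ ≤ 10 * d * ν := by nlinarith
    have hcard := Finset.card_le_mul_card_image (f := f) F b hfib
    -- image bound
    set tset : Fin d → Finset ℤ := fun j => if j = i then ({0} : Finset ℤ) else Finset.Icc (-c) c
      with htsetdef
    have himgsub : F.image f ⊆ Fintype.piFinset tset := by
      intro w hw
      rw [Finset.mem_image] at hw
      obtain ⟨z, hzF, rfl⟩ := hw
      obtain ⟨⟨hzR, _⟩, _⟩ := hmemF z hzF
      rw [Fintype.mem_piFinset]
      intro j
      by_cases hj : j = i
      · subst hj; simp [htsetdef, hfdef]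
      · simp only [htsetdef, if_neg hj, hfdef, Function.update_of_ne hj, Finset.mem_Icc]
        have h1 : |((z j : ℝ))| ≤ R := (abs_coord_le_znorm z j).trans hzR
        constructor
        · have h3 : -(c : ℝ) ≤ ((z j : ℝ)) := by
            have h4 : -R ≤ ((z j : ℝ)) := neg_le_of_abs_le h1
            exact le_trans (neg_le_neg (Int.le_ceil R)) h4
          exact_mod_cast h3
        · have h2 : ((z j : ℝ)) ≤ (c : ℝ) := le_trans (le_abs_self _) (h1.trans (Int.le_ceil R))
          exact_mod_cast h2
    have hpicard : (Fintype.piFinset tset).card = (Finset.Icc (-c) c).card ^ (d-1) := by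
      rw [Fintype.card_piFinset]
      rw [← Finset.mul_prod_erase _ _ (Finset.mem_univ i)]
      rw [show (tset i).card = 1 by simp [htsetdef]]
      rw [one_mul]
      rw [Finset.prod_congr rfl (fun j hj => by
        rw [show tset j = Finset.Icc (-c) c by
          simp [htsetdef, if_neg (Finset.ne_of_mem_erase hj)]])]
      rw [Finset.prod_const, Finset.card_erase_of_mem (Finset.mem_univ i),
        Finset.card_univ, Fintype.card_fin]
    have hIccR : ((Finset.Icc (-c) c).card : ℝ) ≤ 7 * ρ := by
      apply card_Icc_real_le (by positivity)
      push_cast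
      have := Int.ceil_lt_add_one R
      have : (c:ℝ) ≤ R + 1 := by
        simp only [hcdef]; linarith [Int.ceil_lt_add_one R]
      linarith
    calc ((F.card : ℝ)) ≤ (b : ℝ) * ((F.image f).card : ℝ) := by exact_mod_cast hcard
    _ ≤ (10 * d * ν) * ((Fintype.piFinset tset).card : ℝ) := by
        apply mul_le_mul
        · exact Nat.floor_le (by positivity)
        · exact_mod_cast Finset.card_le_card himgsub
        · exact Nat.cast_nonneg _
        · positivity
    _ ≤ (10 * d * ν) * (7*ρ)^(d-1) := by
        apply mul_le_mul_of_nonneg_left _ (by positivity)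
        rw [hpicard]
        push_cast
        exact pow_le_pow_left₀ (by positivity) hIccR _
  -- assemble
  have hsub : hZfin.toFinset ⊆ Finset.univ.biUnion (fun i => (hZifin i).toFinset) := by
    intro z hz
    rw [Set.Finite.mem_toFinset] at hz
    obtain ⟨i, hi⟩ := Set.mem_iUnion.1 (hcover hz)
    exact Finset.mem_biUnion.2 ⟨i, Finset.mem_univ i, (Set.Finite.mem_toFinset _).2 hi⟩
  have h1 : Z.ncard ≤ ∑ i : Fin d, (hZifin i).toFinset.card := by
    rw [Set.ncard_eq_toFinset_card Z hZfin]
    exact le_trans (Finset.card_le_card hsub) (Finset.card_biUnion_le)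
  calc (Z.ncard : ℝ) ≤ ((∑ i : Fin d, (hZifin i).toFinset.card : ℕ) : ℝ) := by exact_mod_cast h1
  _ = ∑ i : Fin d, (((hZifin i).toFinset.card : ℝ)) := by push_cast; rfl
  _ ≤ ∑ _i : Fin d, (10 * d * ν) * (7*ρ)^(d-1) := Finset.sum_le_sum (fun i _ => hZicard i)
  _ = d * ((10 * (d:ℝ) * ν) * (7*ρ)^(d-1)) := by
      rw [Finset.sum_const, Finset.card_univ, Fintype.card_fin, nsmul_eq_mul]
  _ = (10 * (d:ℝ)^2 * 7^(d-1)) * ρ^(d-1) * ν := by rw [mul_pow]; ring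

lemma two_rpow_pos (x : ℝ) : (0:ℝ) < (2:ℝ) ^ x := Real.rpow_pos_of_pos two_pos x

lemma one_le_two_rpow {x : ℝ} (hx : 0 ≤ x) : (1:ℝ) ≤ (2:ℝ) ^ x := by
  calc (1:ℝ) = 2 ^ (0:ℝ) := (Real.rpow_zero 2).symm
  _ ≤ 2 ^ x := Real.rpow_le_rpow_of_exponent_le one_le_two hx

lemma gscale_neg_alpha {α : ℝ} (hα : 0 < α) (n : ℕ) :
    gscale α n ^ (-α) = (2:ℝ) ^ (-(n:ℝ)) := by
  rw [gscale, ← Real.rpow_mul (by norm_num), mul_neg, div_mul_cancel₀ _ (ne_of_gt hα)]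

lemma eventually_two_rpow_ge (c A B : ℝ) (hc : 0 < c) :
    ∀ᶠ n : ℕ in atTop, A + B * n ≤ (2:ℝ) ^ (c * (n:ℝ)) := by
  have hlog : (0:ℝ) < Real.log 2 := Real.log_pos one_lt_two
  have h0 : Tendsto (fun x : ℝ => Real.exp x / x) atTop atTop := by
    simpa using Real.tendsto_exp_div_pow_atTop 1
  have hl : Tendsto (fun n : ℕ => c * Real.log 2 * (n:ℝ)) atTop atTop :=
    Tendsto.const_mul_atTop (by positivity) tendsto_natCast_atTop_atTop
  have h1 : Tendsto (fun n : ℕ =>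
      Real.exp (c * Real.log 2 * (n:ℝ)) / (c * Real.log 2 * (n:ℝ))) atTop atTop := h0.comp hl
  set M : ℝ := (|A| + |B| + 1) / (c * Real.log 2) with hMdef
  filter_upwards [h1.eventually_ge_atTop M, eventually_ge_atTop 1] with n hn hn1
  have hn1' : (1:ℝ) ≤ (n:ℝ) := by exact_mod_cast hn1
  have hpos : 0 < c * Real.log 2 * (n:ℝ) := by positivity
  have h2 : M * (c * Real.log 2 * (n:ℝ)) ≤ Real.exp (c * Real.log 2 * (n:ℝ)) :=
    (le_div_iff₀ hpos).1 hn
  have h3 : M * (c * Real.log 2 * (n:ℝ)) = (|A| + |B| + 1) * n := by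
    rw [hMdef]
    field_simp
  have h4 : A + B * n ≤ (|A| + |B| + 1) * n := by
    have hA : A ≤ |A| * n := le_trans (le_abs_self A)
      (le_mul_of_one_le_right (abs_nonneg A) hn1')
    have hB : B * n ≤ |B| * n := mul_le_mul_of_nonneg_right (le_abs_self B) (by positivity)
    nlinarith
  have h5 : (2:ℝ) ^ (c * (n:ℝ)) = Real.exp (c * Real.log 2 * (n:ℝ)) := by
    rw [Real.rpow_def_of_pos two_pos]
    ring_nf
  rw [h5]
  linarith [h2, h3.symm.le]

lemma pow_le_exp_mul_factorial (a : ℕ) : ((a:ℝ))^a ≤ Real.exp a * a.factorial := by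
  have h := Real.sum_le_exp_of_nonneg (x := (a:ℝ)) (Nat.cast_nonneg a) (a+1)
  have h2 : ((a:ℝ))^a / (a.factorial : ℝ) ≤ Real.exp a := by
    refine le_trans ?_ h
    exact Finset.single_le_sum (f := fun i => ((a:ℝ))^i / (i.factorial : ℝ))
      (fun i _ => by positivity) (Finset.self_mem_range_succ a)
  have hfac : (0:ℝ) < (a.factorial : ℝ) := by exact_mod_cast a.factorial_pos
  rw [div_le_iff₀ hfac] at h2
  exact h2

lemma bad_prob {Ω : Type*} [MeasurableSpace Ω] (P : Measure Ω) {d : ℕ}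
    (τ : (Fin d → ℤ) → Ω → ℝ)
    (hindep : iIndepFun τ P)
    (u q : ℝ) (htail : ∀ y, P {ω | u ≤ τ y ω} = ENNReal.ofReal q)
    (S : Finset (Fin d → ℤ)) (a : ℕ) :
    P (⋃ A ∈ S.powersetCard a, {ω | ∀ y ∈ A, u ≤ τ y ω})
      ≤ (S.card.choose a) * ENNReal.ofReal q ^ a := by
  classical
  calc P (⋃ A ∈ S.powersetCard a, {ω | ∀ y ∈ A, u ≤ τ y ω})
      ≤ ∑ A ∈ S.powersetCard a, P {ω | ∀ y ∈ A, u ≤ τ y ω} :=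
        measure_biUnion_finset_le _ _
  _ ≤ ∑ _A ∈ S.powersetCard a, ENNReal.ofReal q ^ a := by
      apply Finset.sum_le_sum
      intro A hA
      have hAcard : A.card = a := (Finset.mem_powersetCard.1 hA).2
      have hset : {ω | ∀ y ∈ A, u ≤ τ y ω} = ⋂ y ∈ A, τ y ⁻¹' Set.Ici u := by
        ext ω; simp [Set.mem_iInter]
      rw [hset, hindep.measure_inter_preimage_eq_mul A
        (sets := fun _ => Set.Ici u) (fun i _ => measurableSet_Ici)]
      have hprod : ∏ i ∈ A, P (τ i ⁻¹' Set.Ici u) = ENNReal.ofReal q ^ a := by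
        rw [← hAcard, ← Finset.prod_const]
        exact Finset.prod_congr rfl (fun y _ => htail y)
      rw [hprod]
  _ = (S.card.choose a) * ENNReal.ofReal q ^ a := by
      rw [Finset.sum_const, Finset.card_powersetCard, nsmul_eq_mul]


lemma finite_ball {d : ℕ} (R : ℝ) : {z : Fin d → ℤ | znorm z ≤ R}.Finite := by
  apply Set.Finite.subset (Set.Finite.pi (fun _ : Fin d => Set.finite_Icc (-⌈R⌉) ⌈R⌉))
  intro z hz
  simp only [Set.mem_pi, Set.mem_univ, Set.mem_Icc, forall_true_left]
  intro i
  have h1 : |((z i : ℝ))| ≤ R := (abs_coord_le_znorm z i).trans hz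
  have h2 : ((z i : ℝ)) ≤ (⌈R⌉ : ℝ) := le_trans (le_abs_self _) (h1.trans (Int.le_ceil R))
  have h3 : -(⌈R⌉ : ℝ) ≤ ((z i : ℝ)) :=
    le_trans (neg_le_neg (Int.le_ceil R)) (le_trans (neg_le_neg h1) (neg_abs_le _))
  exact ⟨by exact_mod_cast h3, by exact_mod_cast h2⟩

lemma finite_annulus (d : ℕ) (x : Fin d → ℤ) (n : ℕ) : (annulus d x n).Finite := by
  have h1 : annulus d x n ⊆ (fun z => z + x) ''
      {z : Fin d → ℤ | znorm z ≤ rhoscale d n + nuscale d n} := by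
    intro y hy
    exact ⟨y - x, hy.1, by simp⟩
  exact (((finite_ball _).image _)).subset h1

lemma annulus_card {d : ℕ} (hd : 3 ≤ d) {n : ℕ} (hn : 4 ≤ n) (x : Fin d → ℤ) :
    ((annulus d x n).ncard : ℝ)
      ≤ (10*(d:ℝ)^2*7^(d-1)) * (rhoscale d n)^(d-1) * nuscale d n := by
  have hd0 : (0:ℝ) < d := by exact_mod_cast lt_of_lt_of_le (by norm_num) hd
  have hd3 : (3:ℝ) ≤ d := by exact_mod_cast hd
  have hn4 : (4:ℝ) ≤ n := by exact_mod_cast hn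
  have hν1 : 1 ≤ nuscale d n := one_le_two_rpow (by positivity)
  have h2ν : 2 * nuscale d n ≤ rhoscale d n := by
    rw [nuscale, rhoscale]
    calc 2 * (2:ℝ)^((1/(d:ℝ))*(n:ℝ)/2) = 2^(1 + (1/(d:ℝ))*(n:ℝ)/2) := by
          rw [Real.rpow_add two_pos, Real.rpow_one]
    _ ≤ 2^((1-1/(3*(d:ℝ)))*(n:ℝ)/2) := by
        apply Real.rpow_le_rpow_of_exponent_le one_le_two
        have hu3 : 1/(d:ℝ) ≤ 1/3 := one_div_le_one_div_of_le (by norm_num) hd3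
        have hun : (1/(d:ℝ))*(n:ℝ) ≤ (1/3)*(n:ℝ) :=
          mul_le_mul_of_nonneg_right hu3 (by positivity)
        have hun0 : (0:ℝ) ≤ (1/(d:ℝ))*(n:ℝ) := by positivity
        have h3d : (1:ℝ)/(3*(d:ℝ)) = (1/3)*(1/(d:ℝ)) := by ring
        nlinarith [hun, hun0, hn4]
  have := shell_count hd (rhoscale d n) (nuscale d n) hν1 h2ν x
  simpa [annulus] using this

lemma choose_mul_pow_le {N a : ℕ} {NB p : ℝ} (hp : 0 ≤ p) (hNB : 0 ≤ NB) (hN : (N:ℝ) ≤ NB)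
    (ha : 1 ≤ a) (hhalf : NB * p * Real.exp 1 ≤ (a:ℝ) / 2) :
    (N.choose a : ℝ) * p ^ a ≤ (1/2)^a := by
  have ha0 : (0:ℝ) < a := by exact_mod_cast lt_of_lt_of_le zero_lt_one ha
  have hfac : (0:ℝ) < (a.factorial : ℝ) := by exact_mod_cast a.factorial_pos
  have h1 : (N.choose a : ℝ) ≤ ((N:ℝ))^a / (a.factorial : ℝ) := by
    have := Nat.choose_le_pow_div (α := ℝ) a N
    simpa using this
  have h3 : (N.choose a : ℝ) * p^a ≤ (NB * p)^a / (a.factorial : ℝ) := by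
    rw [mul_pow]
    calc (N.choose a : ℝ) * p^a ≤ (((N:ℝ))^a / (a.factorial:ℝ)) * p^a :=
          mul_le_mul_of_nonneg_right h1 (by positivity)
    _ ≤ (NB^a / (a.factorial:ℝ)) * p^a := by
        gcongr
    _ = NB^a * p^a / (a.factorial:ℝ) := by ring
  have h4 : (NB*p)^a / (a.factorial:ℝ) ≤ (NB*p)^a * (Real.exp 1)^a / ((a:ℝ))^a := by
    rw [div_le_div_iff₀ hfac (by positivity)]
    have h5 := pow_le_exp_mul_factorial a
    have h6 : Real.exp (a:ℝ) = (Real.exp 1)^a := by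
      simp [← Real.exp_nat_mul]
    calc (NB*p)^a * ((a:ℝ))^a ≤ (NB*p)^a * (Real.exp (a:ℝ) * (a.factorial:ℝ)) :=
          mul_le_mul_of_nonneg_left h5 (by positivity)
    _ = (NB*p)^a * (Real.exp 1)^a * (a.factorial:ℝ) := by rw [h6]; ring
  have h7 : (NB*p)^a * (Real.exp 1)^a / ((a:ℝ))^a = ((NB*p*Real.exp 1)/(a:ℝ))^a := by
    rw [div_pow]; ring
  have h8 : (NB*p*Real.exp 1)/(a:ℝ) ≤ 1/2 := by
    rw [div_le_iff₀ ha0]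
    linarith
  have h9 : (0:ℝ) ≤ (NB*p*Real.exp 1)/(a:ℝ) := by positivity
  calc (N.choose a : ℝ) * p^a ≤ (NB*p)^a / (a.factorial:ℝ) := h3
  _ ≤ (NB*p)^a * (Real.exp 1)^a / ((a:ℝ))^a := h4
  _ = ((NB*p*Real.exp 1)/(a:ℝ))^a := h7
  _ ≤ (1/2)^a := pow_le_pow_left₀ h9 h8 a

lemma Dcard_bound (d m n : ℕ) (hm : 1 ≤ m) :
    (((Fintype.piFinset (fun _ : Fin d =>
        Finset.Icc (-⌈(m:ℝ) * rscale n⌉) ⌈(m:ℝ)*rscale n⌉)).card : ℝ))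
      ≤ ((2:ℝ)^(((m:ℝ)+3) + (n:ℝ)/2))^d := by
  have hr1 : (1:ℝ) ≤ rscale n := one_le_two_rpow (by positivity)
  have hm1 : (1:ℝ) ≤ (m:ℝ) := by exact_mod_cast hm
  have hmr1 : (1:ℝ) ≤ (m:ℝ) * rscale n := by nlinarith [hm1, hr1]
  rw [Fintype.card_piFinset]
  rw [Finset.prod_const, Finset.card_univ, Fintype.card_fin]
  push_cast
  apply pow_le_pow_left₀ (by positivity)
  have hIcc : ((Finset.Icc (-⌈(m:ℝ) * rscale n⌉) ⌈(m:ℝ)*rscale n⌉).card : ℝ)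
      ≤ 5 * ((m:ℝ) * rscale n) := by
    apply card_Icc_real_le (by positivity)
    push_cast
    have h1 : (⌈(m:ℝ)*rscale n⌉ : ℝ) ≤ (m:ℝ)*rscale n + 1 :=
      le_of_lt (Int.ceil_lt_add_one _)
    linarith
  refine hIcc.trans ?_
  have h5m : (5:ℝ)*(m:ℝ) ≤ (2:ℝ)^((m:ℝ)+3) := by
    have h1 : (m:ℕ) < 2^m := Nat.lt_two_pow_self
    have h2 : 5*m ≤ 8 * 2^m := by
      calc 5*m ≤ 5*2^m := by
            apply Nat.mul_le_mul_left
            exact le_of_lt h1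
      _ ≤ 8*2^m := Nat.mul_le_mul_right _ (by norm_num)
    have h3 : ((5*m : ℕ):ℝ) ≤ ((8*2^m : ℕ):ℝ) := by exact_mod_cast h2
    have h4 : (2:ℝ)^((m:ℝ)+3) = ((2^m : ℕ):ℝ) * 8 := by
      rw [Real.rpow_add two_pos, Real.rpow_natCast,
        show (3:ℝ) = ((3:ℕ):ℝ) by norm_num, Real.rpow_natCast]
      norm_num
    rw [h4]
    push_cast at h3 ⊢
    linarith
  calc 5 * ((m:ℝ) * rscale n) = (5*(m:ℝ)) * rscale n := by ring
  _ ≤ (2:ℝ)^((m:ℝ)+3) * rscale n := mul_le_mul_of_nonneg_right h5m (by positivity)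
  _ = (2:ℝ)^(((m:ℝ)+3) + (n:ℝ)/2) := by
      rw [rscale, ← Real.rpow_add two_pos]

set_option maxHeartbeats 2000000 in
theorem stmt_4 {Ω : Type*} [MeasurableSpace Ω] (P : Measure Ω) [IsProbabilityMeasure P]
    (d : ℕ) (hd : 3 ≤ d) (α : ℝ) (hα : α ∈ Set.Ioo (0 : ℝ) 1) (L : ℝ → ℝ)
    (τ : (Fin d → ℤ) → Ω → ℝ) (hτ : IsEnv P d α L τ)
    (ε M : ℝ) (hε : 0 < ε) (hε1 : ε < 1) (hM : 1 < M) (m : ℕ) (hm : 1 ≤ m) :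
    ∃ K : ℝ, ∀ᵐ ω ∂P, ∃ n₀ : ℕ, ∀ n ≥ n₀, ∀ x ∈ bigD d m n,
      ((traps τ α m ε M n ω ∩ annulus d x n).ncard : ℝ)
        ≤ K * rhoscale d n ^ ((d : ℝ) - 1) * nuscale d n * gscale α n ^ (-α) := by
  classical
  obtain ⟨hα0, hα1⟩ := hα
  have hd0 : (0:ℝ) < d := by exact_mod_cast lt_of_lt_of_le (by norm_num) hd
  have hd3 : (3:ℝ) ≤ (d:ℝ) := by exact_mod_cast hd
  set C : ℝ := 10*(d:ℝ)^2*7^(d-1) with hCdef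
  have hC0 : 0 < C := by positivity
  have hεα : (0:ℝ) < ε ^ (-α) := Real.rpow_pos_of_pos hε _
  set K : ℝ := max 1 (4 * Real.exp 1 * ε ^ (-α) * C) with hKdef
  have hK1 : (1:ℝ) ≤ K := le_max_left _ _
  have hK4 : 4 * Real.exp 1 * ε ^ (-α) * C ≤ K := le_max_right _ _
  have hK0 : (0:ℝ) < K := lt_of_lt_of_le one_pos hK1
  refine ⟨K, ?_⟩
  set μ : ℕ → ℝ := fun n => (rhoscale d n)^(d-1) * nuscale d n * (2:ℝ)^(-(n:ℝ)) with hμdef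
  have hρpos : ∀ n, 0 < rhoscale d n := fun n => two_rpow_pos _
  have hνpos : ∀ n, 0 < nuscale d n := fun n => two_rpow_pos _
  have hμpos : ∀ n, 0 < μ n := fun n => by
    have h1 := hρpos n; have h2 := hνpos n; have h3 := two_rpow_pos (-(n:ℝ))
    simp only [hμdef]
    positivity
  set a : ℕ → ℕ := fun n => ⌊K * μ n⌋₊ + 1 with hadef
  have haK : ∀ n, K * μ n < a n := fun n => by
    have h := Nat.lt_floor_add_one (K * μ n)
    simp only [hadef]
    exact_mod_cast h
  have ha1 : ∀ n, 1 ≤ a n := fun n => by simp only [hadef]; omega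
  have haμ : ∀ n, μ n ≤ (a n : ℝ) := fun n => by
    nlinarith [haK n, hμpos n, hK1]
  set u : ℕ → ℝ := fun n => ε * gscale α n with hudef
  set ed : ℝ := (1-1/(3*(d:ℝ)))*((d:ℝ)-1)/2 + 1/(2*(d:ℝ)) - 1 with heddef
  have hed : (1:ℝ)/18 ≤ ed := by
    have hfact : ed - 1/18 = (18*(d:ℝ)^2 - 62*(d:ℝ) + 24)/(36*(d:ℝ)) := by
      simp only [heddef]
      field_simp
      ring
    have hnum : (0:ℝ) ≤ 18*(d:ℝ)^2 - 62*(d:ℝ) + 24 := by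
      nlinarith [mul_nonneg (by linarith : (0:ℝ) ≤ (d:ℝ)-3) (by linarith : (0:ℝ) ≤ 9*(d:ℝ)-4)]
    have h0 : (0:ℝ) ≤ ed - 1/18 := hfact ▸ div_nonneg hnum (by positivity)
    linarith
  have hed0 : (0:ℝ) < ed := lt_of_lt_of_le (by norm_num) hed
  have hμeq : ∀ n : ℕ, μ n = (2:ℝ) ^ (ed * (n:ℝ)) := by
    intro n
    have hcast : ((d-1:ℕ):ℝ) = (d:ℝ) - 1 := by
      rw [Nat.cast_sub (by omega)]; norm_num
    simp only [hμdef, rhoscale, nuscale]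
    rw [← Real.rpow_natCast ((2:ℝ)^((1-1/(3*(d:ℝ)))*(n:ℝ)/2)) (d-1),
      ← Real.rpow_mul (by norm_num : (0:ℝ) ≤ 2),
      ← Real.rpow_add two_pos, ← Real.rpow_add two_pos]
    congr 1
    rw [hcast, heddef]
    ring
  set S : ℕ → (Fin d → ℤ) → Finset (Fin d → ℤ) :=
    fun n x => (finite_annulus d x n).toFinset with hSdef
  set Bad : ℕ → (Fin d → ℤ) → Set Ω := fun n x =>
    ⋃ A ∈ (S n x).powersetCard (a n), {ω | ∀ y ∈ A, u n ≤ τ y ω} with hBaddef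
  set Dfin : ℕ → Finset (Fin d → ℤ) := fun n =>
    Fintype.piFinset (fun _ : Fin d => Finset.Icc (-⌈(m:ℝ) * rscale n⌉) ⌈(m:ℝ)*rscale n⌉)
    with hDdef
  set sev : ℕ → Set Ω := fun n => ⋃ x ∈ Dfin n, Bad n x with hsevdef
  -- eventual thresholds
  have hαinv : (0:ℝ) < 1/α := by positivity
  obtain ⟨v₀, hv₀⟩ := eventually_atTop.1 (hτ.decay.eventually_lt_const (by norm_num : (0:ℝ) < 1))
  obtain ⟨N₁, hN₁⟩ := eventually_atTop.1 (eventually_two_rpow_ge (1/α) ((max 1 v₀)/ε) 0 hαinv)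
  obtain ⟨N₂, hN₂⟩ := eventually_atTop.1
    (eventually_two_rpow_ge ed (((m:ℝ)+3)*(d:ℝ)) ((d:ℝ)/2+1) hed0)
  set N := max (max N₁ N₂) 4 with hNdef
  have hu1 : ∀ n ≥ N, max 1 v₀ ≤ u n := by
    intro n hn
    have h := hN₁ n (le_trans (le_trans (le_max_left _ _) (le_max_left _ _)) hn)
    rw [zero_mul, add_zero] at h
    have hg : gscale α n = (2:ℝ)^((1/α)*(n:ℝ)) := by
      rw [gscale]; congr 1; ring
    have h2 : (max 1 v₀)/ε ≤ gscale α n := by rw [hg]; exact h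
    have h3 := (div_le_iff₀ hε).1 h2
    simp only [hudef]
    linarith [h3]
  have huge1 : ∀ n ≥ N, 1 ≤ u n := fun n hn => le_trans (le_max_left _ _) (hu1 n hn)
  have hL1 : ∀ n ≥ N, L (u n) < 1 := fun n hn => hv₀ (u n) (le_trans (le_max_right _ _) (hu1 n hn))
  have hqbound : ∀ n ≥ N, (u n)^(-α) * (1 + L (u n)) ≤ 2 * ε^(-α) * (2:ℝ)^(-(n:ℝ)) := by
    intro n hn
    have h1 : (u n)^(-α) = ε^(-α) * (2:ℝ)^(-(n:ℝ)) := by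
      simp only [hudef]
      rw [Real.mul_rpow hε.le (le_of_lt (show (0:ℝ) < gscale α n from two_rpow_pos _)),
        gscale_neg_alpha hα0]
    rw [h1]
    have h2 : 1 + L (u n) ≤ 2 := by linarith [hL1 n hn]
    have h3 : (0:ℝ) ≤ ε^(-α) * (2:ℝ)^(-(n:ℝ)) := by positivity
    nlinarith [mul_le_mul_of_nonneg_left h2 h3]
  -- probability bound
  have hpbound : ∀ n, N ≤ n → P (sev n) ≤ ENNReal.ofReal ((2:ℝ)^(-(n:ℝ))) := by
    intro n hn
    have hn4 : 4 ≤ n := le_trans (le_max_right _ _) hn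
    set p' : ℝ := 2 * ε^(-α) * (2:ℝ)^(-(n:ℝ)) with hp'def
    have hp'0 : (0:ℝ) ≤ p' := by simp only [hp'def]; positivity
    have hx : ∀ x : Fin d → ℤ, P (Bad n x) ≤ ENNReal.ofReal ((1/2 : ℝ)^(a n)) := by
      intro x
      have htail : ∀ y, P {ω | u n ≤ τ y ω}
          = ENNReal.ofReal ((u n)^(-α) * (1 + L (u n))) :=
        fun y => hτ.tail y (u n) (huge1 n hn)
      have h1 := bad_prob P τ hτ.indep (u n) _ htail (S n x) (a n)
      have hcard : (((S n x).card : ℝ)) ≤ C * (rhoscale d n)^(d-1) * nuscale d n := by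
        simp only [hSdef]
        rw [← Set.ncard_eq_toFinset_card (annulus d x n) (finite_annulus d x n)]
        exact annulus_card hd hn4 x
      refine le_trans (by simpa only [hBaddef] using h1) ?_
      calc ((S n x).card.choose (a n) : ℝ≥0∞)
            * ENNReal.ofReal ((u n)^(-α)*(1 + L (u n))) ^ (a n)
          ≤ ((S n x).card.choose (a n) : ℝ≥0∞) * ENNReal.ofReal p' ^ (a n) := by
            gcongr
            exact hqbound n hn
      _ = ENNReal.ofReal (((S n x).card.choose (a n) : ℝ) * p' ^ (a n)) := by
            rw [ENNReal.ofReal_mul (Nat.cast_nonneg _), ENNReal.ofReal_pow hp'0,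
              ENNReal.ofReal_natCast]
      _ ≤ ENNReal.ofReal ((1/2 : ℝ)^(a n)) := by
            apply ENNReal.ofReal_le_ofReal
            apply choose_mul_pow_le hp'0
              (mul_nonneg (mul_nonneg hC0.le (pow_nonneg (hρpos n).le _)) (hνpos n).le)
              hcard (ha1 n)
            have h2 : (C * (rhoscale d n)^(d-1) * nuscale d n) * p' * Real.exp 1
                = (4 * Real.exp 1 * ε^(-α) * C) * μ n / 2 := by
              simp only [hp'def, hμdef]; ring
            rw [h2]
            have h3 : (4*Real.exp 1*ε^(-α)*C) * μ n ≤ K * μ n :=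
              mul_le_mul_of_nonneg_right hK4 (hμpos n).le
            have h4 := (haK n).le
            linarith
    calc P (sev n) ≤ ∑ x ∈ Dfin n, P (Bad n x) := by
          simp only [hsevdef]
          exact measure_biUnion_finset_le _ _
    _ ≤ ∑ _x ∈ Dfin n, ENNReal.ofReal ((1/2 : ℝ)^(a n)) := Finset.sum_le_sum (fun x _ => hx x)
    _ = ((Dfin n).card : ℝ≥0∞) * ENNReal.ofReal ((1/2 : ℝ)^(a n)) := by
          rw [Finset.sum_const, nsmul_eq_mul]
    _ = ENNReal.ofReal (((Dfin n).card : ℝ) * (1/2 : ℝ)^(a n)) := by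
          rw [ENNReal.ofReal_mul (Nat.cast_nonneg _), ENNReal.ofReal_natCast]
    _ ≤ ENNReal.ofReal ((2:ℝ)^(-(n:ℝ))) := by
        apply ENNReal.ofReal_le_ofReal
        have hD := Dcard_bound d m n hm
        have hhalfpow : ((1:ℝ)/2)^(a n) = (2:ℝ)^(-((a n):ℝ)) := by
          rw [Real.rpow_neg (by norm_num), Real.rpow_natCast, one_div, inv_pow]
        rw [hhalfpow]
        have hDle : (((Dfin n).card:ℝ)) ≤ (2:ℝ)^((((m:ℝ)+3) + (n:ℝ)/2)*(d:ℝ)) := by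
          refine le_trans (by simpa only [hDdef] using hD) ?_
          rw [← Real.rpow_natCast ((2:ℝ)^(((m:ℝ)+3)+(n:ℝ)/2)) d,
            ← Real.rpow_mul (by norm_num : (0:ℝ) ≤ 2)]
        calc ((Dfin n).card:ℝ) * (2:ℝ)^(-((a n):ℝ))
            ≤ (2:ℝ)^((((m:ℝ)+3)+(n:ℝ)/2)*(d:ℝ)) * (2:ℝ)^(-((a n):ℝ)) :=
              mul_le_mul_of_nonneg_right hDle (by positivity)
        _ = (2:ℝ)^((((m:ℝ)+3)+(n:ℝ)/2)*(d:ℝ) + (-((a n):ℝ))) := by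
              rw [← Real.rpow_add two_pos]
        _ ≤ (2:ℝ)^(-(n:ℝ)) := by
            apply Real.rpow_le_rpow_of_exponent_le one_le_two
            have h5 := hN₂ n (le_trans (le_trans (le_max_right _ _) (le_max_left _ _)) hn)
            have h6 : ((m:ℝ)+3)*(d:ℝ) + ((d:ℝ)/2+1)*(n:ℝ) ≤ μ n := by
              rw [hμeq n]; exact h5
            have h7 : μ n ≤ ((a n) : ℝ) := haμ n
            nlinarith [h6, h7]
  -- summability
  have hsum : (∑' n, P (sev n)) ≠ ∞ := by
    have hbound : ∀ n, P (sev n) ≤ (if n < N then (1:ℝ≥0∞) else 0) + ENNReal.ofReal (1/2) ^ n := by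
      intro n
      rcases lt_or_ge n N with h | h
      · rw [if_pos h]
        exact le_trans prob_le_one le_self_add
      · rw [if_neg (not_lt.2 h), zero_add]
        refine (hpbound n h).trans (le_of_eq ?_)
        rw [← ENNReal.ofReal_pow (by norm_num : (0:ℝ) ≤ 1/2)]
        congr 1
        rw [Real.rpow_neg (by norm_num), Real.rpow_natCast, one_div, inv_pow]
    have h1 : (∑' n, (if n < N then (1:ℝ≥0∞) else 0))
        = ∑ n ∈ Finset.range N, (if n < N then (1:ℝ≥0∞) else 0) :=
      tsum_eq_sum (fun b hb => if_neg (by simpa using hb))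
    have h2 : (∑ n ∈ Finset.range N, (if n < N then (1:ℝ≥0∞) else 0)) ≤ (N:ℝ≥0∞) := by
      calc (∑ n ∈ Finset.range N, (if n < N then (1:ℝ≥0∞) else 0))
          ≤ ∑ _n ∈ Finset.range N, (1:ℝ≥0∞) := Finset.sum_le_sum (fun i _ => by
            split <;> simp)
      _ = (N:ℝ≥0∞) := by simp
    have hhalf1 : ENNReal.ofReal (1/2) < 1 := by
      rw [← ENNReal.ofReal_one]
      exact ENNReal.ofReal_lt_ofReal_iff_of_nonneg (by norm_num) |>.2 (by norm_num)
    have hfin : (∑' n, ((if n < N then (1:ℝ≥0∞) else 0) + ENNReal.ofReal (1/2) ^ n)) ≠ ∞ := by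
      rw [ENNReal.tsum_add, h1, ENNReal.tsum_geometric]
      apply ENNReal.add_ne_top.2
      constructor
      · exact ne_of_lt (lt_of_le_of_lt h2 (ENNReal.natCast_lt_top N))
      · exact ne_of_lt (ENNReal.inv_lt_top.2 (tsub_pos_iff_lt.2 hhalf1))
    exact ne_top_of_le_ne_top hfin (ENNReal.tsum_le_tsum hbound)
  -- Borel-Cantelli and conclusion
  have hBC := MeasureTheory.ae_eventually_notMem hsum
  filter_upwards [hBC] with ω hω
  obtain ⟨n₁, hn₁⟩ := eventually_atTop.1 hω
  refine ⟨max n₁ N, ?_⟩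
  intro n hn x hxD
  have hnN : N ≤ n := le_trans (le_max_right _ _) hn
  have hrw : K * rhoscale d n ^ ((d:ℝ)-1) * nuscale d n * gscale α n ^ (-α) = K * μ n := by
    have hcast : ((d-1:ℕ):ℝ) = (d:ℝ) - 1 := by rw [Nat.cast_sub (by omega)]; norm_num
    simp only [hμdef]
    rw [gscale_neg_alpha hα0]
    rw [show rhoscale d n ^ ((d:ℝ)-1) = rhoscale d n ^ (d-1:ℕ) by
      rw [← Real.rpow_natCast (rhoscale d n) (d-1), hcast]]
    ring
  rw [hrw]
  by_contra hcon
  push_neg at hcon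
  have hTfin : (traps τ α m ε M n ω ∩ annulus d x n).Finite :=
    (finite_annulus d x n).subset inter_subset_right
  have hacount : a n ≤ (traps τ α m ε M n ω ∩ annulus d x n).ncard := by
    have h0 := (Nat.floor_lt (mul_nonneg hK0.le (hμpos n).le)).2 hcon
    simp only [hadef]
    omega
  have hacard : a n ≤ hTfin.toFinset.card := by
    rw [← Set.ncard_eq_toFinset_card _ hTfin]
    exact hacount
  obtain ⟨A, hAsub, hAcard⟩ := Finset.exists_subset_card_eq hacard
  have hAS : A ∈ (S n x).powersetCard (a n) := by
    rw [Finset.mem_powersetCard]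
    refine ⟨?_, hAcard⟩
    intro y hy
    have h0 := hAsub hy
    rw [Set.Finite.mem_toFinset] at h0
    simp only [hSdef]
    rw [Set.Finite.mem_toFinset]
    exact h0.2
  have hωBad : ω ∈ Bad n x := by
    simp only [hBaddef]
    refine Set.mem_biUnion hAS ?_
    simp only [Set.mem_setOf_eq]
    intro y hy
    have h0 := hAsub hy
    rw [Set.Finite.mem_toFinset] at h0
    exact h0.1.2.1
  have hxDfin : x ∈ Dfin n := by
    simp only [hDdef]
    rw [Fintype.mem_piFinset]
    intro i
    rw [Finset.mem_Icc]
    have h1 : |((x i : ℝ))| ≤ (m:ℝ) * rscale n := (abs_coord_le_znorm x i).trans hxD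
    constructor
    · have h3 : -(⌈(m:ℝ)*rscale n⌉:ℝ) ≤ (x i : ℝ) :=
        le_trans (neg_le_neg (Int.le_ceil _)) (neg_le_of_abs_le h1)
      exact_mod_cast h3
    · have h3 : ((x i:ℝ)) ≤ (⌈(m:ℝ)*rscale n⌉:ℝ) :=
        le_trans (le_abs_self _) (h1.trans (Int.le_ceil _))
      exact_mod_cast h3
  exact hn₁ n (le_trans (le_max_left _ _) hn) (Set.mem_biUnion hxDfin hωBad)
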